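/- If A is Schur stable and W ⊆ ℝ^n is compact, then there exists a compact robust positively invariant set Ω for x_{t+1} = A x_t + w_t, w_t ∈ W; for instance Ω = Σ_{k=0}^∞ A^k W (Minkowski sum), which is well defined and satisfies A Ω ⊕ W ⊆ Ω (indeed with equality). -/

import Mathlib

open Matrix Pointwise

/-- A real square matrix is Schur stable if all of its (complex) eigenvalues lie strictly
inside the unit circle. -/
def SchurStable {m : Type*} [Fintype m] [DecidableEq m] (A : Matrix m m ℝ) : Prop :=
  ∀ μ ∈ spectrum ℂ (A.map (algebraMap ℝ ℂ)), ‖μ‖ < 1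

/-- The infinite Minkowski sum `Ω = Σ_{k=0}^∞ Aᵏ W`. -/
def minkowskiLimit {n : ℕ} (A : Matrix (Fin n) (Fin n) ℝ) (W : Set (Fin n → ℝ)) :
    Set (Fin n → ℝ) :=
  {x | ∃ f : ℕ → (Fin n → ℝ), (∀ k, f k ∈ W) ∧ HasSum (fun k => (A ^ k).mulVec (f k)) x}

section RPIHelpers

open Filter
open scoped NNReal ENNReal Topology

attribute [local instance] Matrix.linftyOpNormedRing Matrix.linftyOpNormedAlgebra

private lemma map_norm_eq' {n : ℕ} (M : Matrix (Fin n) (Fin n) ℝ) :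
    ‖M.map (algebraMap ℝ ℂ)‖ = ‖M‖ := by
  simp [Matrix.linfty_opNorm_def, Matrix.map_apply]

private lemma radius_lt_one' {n : ℕ} (A : Matrix (Fin n) (Fin n) ℝ)
    (hA : ∀ μ ∈ spectrum ℂ (A.map (algebraMap ℝ ℂ)), ‖μ‖ < 1) :
    spectralRadius ℂ (A.map (algebraMap ℝ ℂ)) < 1 := by
  set B := A.map (algebraMap ℝ ℂ)
  by_cases h : (spectrum ℂ B).Nonempty
  · have := spectrum.spectralRadius_lt_of_forall_lt_of_nonempty h (r := 1)
      (fun k hk => by simpa [← NNReal.coe_lt_coe] using hA k hk)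
    simpa using this
  · rw [Set.not_nonempty_iff_eq_empty] at h
    simp [spectralRadius, h]

private lemma geo_bound' {n : ℕ} (A : Matrix (Fin n) (Fin n) ℝ)
    (hA : ∀ μ ∈ spectrum ℂ (A.map (algebraMap ℝ ℂ)), ‖μ‖ < 1) :
    ∃ C r : ℝ, 0 ≤ C ∧ 0 < r ∧ r < 1 ∧ ∀ k, ‖A ^ k‖ ≤ C * r ^ k := by
  set B := A.map (algebraMap ℝ ℂ) with hB
  have hBk : ∀ k, ‖B ^ k‖ = ‖A ^ k‖ := by
    intro k
    have : B ^ k = (A ^ k).map (algebraMap ℝ ℂ) := by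
      have := map_pow ((algebraMap ℝ ℂ).mapMatrix) A k
      simpa [RingHom.mapMatrix_apply, hB] using this.symm
    rw [this, map_norm_eq']
  obtain ⟨c, hc1, hc2⟩ := exists_between (radius_lt_one' A hA)
  have hc_top : c ≠ ⊤ := (hc2.trans (by norm_num)).ne
  have hgel := spectrum.pow_nnnorm_pow_one_div_tendsto_nhds_spectralRadius B
  have hev : ∀ᶠ k : ℕ in atTop, (‖B ^ k‖₊ : ℝ≥0∞) ^ (1 / k : ℝ) < c :=
    hgel.eventually_lt_const hc1
  obtain ⟨N, hN⟩ := eventually_atTop.mp hev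
  set r₀ : ℝ := c.toReal with hr₀
  have hr₀1 : r₀ < 1 := by
    have := (ENNReal.toReal_lt_toReal hc_top (ENNReal.one_ne_top)).mpr hc2
    simpa using this
  set r : ℝ := max r₀ (1/2) with hr
  have hr_pos : 0 < r := lt_of_lt_of_le (by norm_num) (le_max_right _ _)
  have hr1 : r < 1 := max_lt hr₀1 (by norm_num)
  set M := max N 1 with hM
  have key : ∀ k, M ≤ k → ‖A ^ k‖ ≤ r ^ k := by
    intro k hk
    have hk1 : 1 ≤ k := le_trans (le_max_right _ _) hk
    have hkN : N ≤ k := le_trans (le_max_left _ _) hk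
    have h1 : (‖B ^ k‖₊ : ℝ≥0∞) ^ (1 / k : ℝ) < c := hN k hkN
    have hk0 : (k : ℝ) ≠ 0 := by positivity
    have h2 : (‖B ^ k‖₊ : ℝ≥0∞) ≤ c ^ (k : ℝ) := by
      have := ENNReal.rpow_le_rpow h1.le (z := (k : ℝ)) (by positivity)
      rwa [← ENNReal.rpow_mul, one_div, inv_mul_cancel₀ hk0, ENNReal.rpow_one] at this
    have h3 : ‖B ^ k‖ ≤ r₀ ^ k := by
      have h4 : c ^ (k : ℝ) = c ^ k := by rw [← ENNReal.rpow_natCast]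
      rw [h4] at h2
      have := ENNReal.toReal_mono (by simp [ENNReal.pow_ne_top hc_top]) h2
      simpa [ENNReal.toReal_pow] using this
    calc ‖A ^ k‖ = ‖B ^ k‖ := (hBk k).symm
      _ ≤ r₀ ^ k := h3
      _ ≤ r ^ k := pow_le_pow_left₀ (ENNReal.toReal_nonneg) (le_max_left _ _) k
  have hsum0 : (0:ℝ) ≤ ∑ j ∈ Finset.range M, ‖A ^ j‖ / r ^ j :=
    Finset.sum_nonneg fun j _ => by positivity
  refine ⟨1 + ∑ j ∈ Finset.range M, ‖A ^ j‖ / r ^ j, r, by linarith, hr_pos, hr1, fun k => ?_⟩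
  rcases lt_or_ge k M with hkM | hkM
  · have hmem : k ∈ Finset.range M := Finset.mem_range.mpr hkM
    have h5 : ‖A ^ k‖ / r ^ k ≤ 1 + ∑ j ∈ Finset.range M, ‖A ^ j‖ / r ^ j := by
      have := Finset.single_le_sum (f := fun j => ‖A ^ j‖ / r ^ j)
        (fun j _ => by positivity) hmem
      linarith
    calc ‖A ^ k‖ = (‖A ^ k‖ / r ^ k) * r ^ k := by field_simp
      _ ≤ _ := mul_le_mul_of_nonneg_right h5 (by positivity)
  · calc ‖A ^ k‖ ≤ r ^ k := key k hkM
      _ ≤ _ := le_mul_of_one_le_left (by positivity) (by linarith)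

private lemma summable_aux' {n : ℕ} (A : Matrix (Fin n) (Fin n) ℝ) {C r M : ℝ}
    (hC : 0 ≤ C) (hr0 : 0 < r) (hr1 : r < 1) (hb : ∀ k, ‖A ^ k‖ ≤ C * r ^ k)
    (f : ℕ → (Fin n → ℝ)) (hfM : ∀ k, ‖f k‖ ≤ M) :
    Summable (fun k => (A ^ k) *ᵥ f k) := by
  apply Summable.of_norm_bounded (g := fun k => (C * M) * r ^ k)
  · exact (summable_geometric_of_lt_one hr0.le hr1).mul_left _
  · intro k
    calc ‖(A ^ k) *ᵥ f k‖ ≤ ‖A ^ k‖ * ‖f k‖ := Matrix.linfty_opNorm_mulVec _ _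
      _ ≤ (C * r ^ k) * M := by
          apply mul_le_mul (hb k) (hfM k) (norm_nonneg _) (by positivity)
      _ = (C * M) * r ^ k := by ring

/-- If `A` is Schur stable and `W` compact, then `Ω = Σ_{k=0}^∞ Aᵏ W` is a compact robust
positively invariant set for `x ↦ A x + w`, `w ∈ W`, satisfying `A Ω ⊕ W = Ω`. -/
theorem compact_rpi_exists {n : ℕ} (A : Matrix (Fin n) (Fin n) ℝ)
    (hA : SchurStable A) (W : Set (Fin n → ℝ)) (hW : IsCompact W) :
    IsCompact (minkowskiLimit A W) ∧
      (∀ x ∈ minkowskiLimit A W, ∀ w ∈ W, A.mulVec x + w ∈ minkowskiLimit A W) ∧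
      (∀ y ∈ minkowskiLimit A W, ∃ x ∈ minkowskiLimit A W, ∃ w ∈ W, y = A.mulVec x + w) := by
  obtain ⟨C, r, hC, hr0, hr1, hb⟩ := geo_bound' A hA
  obtain ⟨M, hM⟩ : ∃ M, ∀ w ∈ W, ‖w‖ ≤ M :=
    hW.isBounded.exists_norm_le
  have hsummable : ∀ f : ℕ → (Fin n → ℝ), (∀ k, f k ∈ W) →
      Summable (fun k => (A ^ k) *ᵥ f k) := fun f hf =>
    summable_aux' A hC hr0 hr1 hb f (fun k => hM _ (hf k))
  -- continuity of A.mulVec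
  have hL : Continuous (A.mulVec) := by
    have := A.mulVecLin.continuous_of_finiteDimensional
    simpa [Matrix.coe_mulVecLin] using this
  have hmap : ∀ {f : ℕ → (Fin n → ℝ)} {x}, HasSum (fun k => (A ^ k) *ᵥ f k) x →
      HasSum (fun k => (A ^ (k + 1)) *ᵥ f k) (A *ᵥ x) := by
    intro f x hx
    have h := hx.map A.mulVecLin.toAddMonoidHom (by simpa [Matrix.coe_mulVecLin] using hL)
    convert h using 1
    funext k
    simp [Matrix.mulVecLin_apply, Matrix.mulVec_mulVec, ← pow_succ']
    simp [Matrix.mulVecLin_apply]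
  refine ⟨?_, ?_, ?_⟩
  · -- compactness
    have hcs : IsCompact {f : ℕ → (Fin n → ℝ) | ∀ k, f k ∈ W} :=
      isCompact_pi_infinite (fun _ : ℕ => hW)
    haveI : CompactSpace ↥{f : ℕ → (Fin n → ℝ) | ∀ k, f k ∈ W} :=
      isCompact_iff_compactSpace.mp hcs
    set g : ↥{f : ℕ → (Fin n → ℝ) | ∀ k, f k ∈ W} → (Fin n → ℝ) :=
      fun f => ∑' k, (A ^ k) *ᵥ (f.1 k) with hg
    have hgc : Continuous g := by
      apply continuous_tsum (u := fun k => (C * M) * r ^ k)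
      · intro k
        have h1 : Continuous ((A ^ k).mulVec) := by
          have := (A ^ k).mulVecLin.continuous_of_finiteDimensional
          simpa [Matrix.coe_mulVecLin] using this
        exact h1.comp ((continuous_apply k).comp continuous_subtype_val)
      · exact (summable_geometric_of_lt_one hr0.le hr1).mul_left _
      · intro k f
        calc ‖(A ^ k) *ᵥ f.1 k‖ ≤ ‖A ^ k‖ * ‖f.1 k‖ := Matrix.linfty_opNorm_mulVec _ _
          _ ≤ (C * r ^ k) * M := by
              apply mul_le_mul (hb k) (hM _ (f.2 k)) (norm_nonneg _) (by positivity)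
          _ = (C * M) * r ^ k := by ring
    have hrange : minkowskiLimit A W = Set.range g := by
      ext x
      constructor
      · rintro ⟨f, hf, hsum⟩
        exact ⟨⟨f, hf⟩, hsum.tsum_eq⟩
      · rintro ⟨⟨f, hf⟩, rfl⟩
        exact ⟨f, hf, (hsummable f hf).hasSum⟩
    rw [hrange]
    exact isCompact_range hgc
  · -- invariance
    rintro x ⟨f, hf, hsum⟩ w hw
    set F : ℕ → (Fin n → ℝ) := fun k => Nat.casesOn k w f with hF
    refine ⟨F, fun k => by cases k with
      | zero => exact hw
      | succ j => exact hf j, ?_⟩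
    have h1 : HasSum (fun k => (A ^ (k + 1)) *ᵥ f k) (A *ᵥ x) := hmap hsum
    have h2 : (fun k => (A ^ (k + 1)) *ᵥ f k)
        = fun k => (fun j => (A ^ j) *ᵥ F j) (k + 1) := rfl
    rw [h2] at h1
    have h3 := (hasSum_nat_add_iff (f := fun j => (A ^ j) *ᵥ F j) 1).mp h1
    simpa [hF, Matrix.one_mulVec] using h3
  · -- reverse inclusion
    rintro y ⟨f, hf, hsum⟩
    have hs2 : Summable (fun k => (A ^ k) *ᵥ f (k + 1)) :=
      hsummable (fun k => f (k + 1)) (fun k => hf _)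
    refine ⟨∑' k, (A ^ k) *ᵥ f (k + 1),
      ⟨fun k => f (k + 1), fun k => hf _, hs2.hasSum⟩, f 0, hf 0, ?_⟩
    have h1 : HasSum (fun k => (A ^ (k + 1)) *ᵥ f (k + 1))
        (A *ᵥ ∑' k, (A ^ k) *ᵥ f (k + 1)) := hmap hs2.hasSum
    have h2 : (fun k => (A ^ (k + 1)) *ᵥ f (k + 1))
        = fun k => (fun j => (A ^ j) *ᵥ f j) (k + 1) := rfl
    rw [h2] at h1
    have h3 := (hasSum_nat_add_iff (f := fun j => (A ^ j) *ᵥ f j) 1).mp h1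
    have := hsum.unique h3
    simpa [Matrix.one_mulVec] using this

end RPIHelpers
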